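/- Let μ be a Borel measure on (0,∞), c₀ ≥ 0, and K(r) = c₀ + ∫_{(0,∞)} e^{-xr} dμ(x). Suppose η ∈ [0, 1/2) satisfies ∫_{(0,∞)} (1+x)^{-η} dμ(x) < ∞. Then for every T > 0 there exist constants C₁, C₂ > 0 such that K(r) ≤ C₁ r^{-η} for all r ∈ (0,T], and ∫_0^h K(r)² dr ≤ C₂ h^{1−2η} for all h ∈ (0, T]. -/

import Mathlib

open Real MeasureTheory

lemma exp_neg_le_rpow_aux {η : ℝ} (hη0 : 0 ≤ η) (hη1 : η ≤ 1) {t : ℝ} (ht : 0 < t) :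
    Real.exp (-t) ≤ t ^ (-η) := by
  have h1 : t ^ η ≤ Real.exp t := by
    rcases le_total t 1 with h | h
    · exact (Real.rpow_le_one ht.le h hη0).trans (Real.one_le_exp ht.le)
    · calc t ^ η ≤ t ^ (1 : ℝ) := Real.rpow_le_rpow_of_exponent_le h hη1
        _ = t := Real.rpow_one t
        _ ≤ Real.exp t := by linarith [Real.add_one_le_exp t]
  rw [Real.rpow_neg ht.le, Real.exp_neg]
  exact inv_anti₀ (Real.rpow_pos_of_pos ht η) h1

theorem kernel_L2_upper_bound (μ : Measure ℝ) (c₀ : ℝ) (hc₀ : 0 ≤ c₀)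
    (η : ℝ) (hη0 : 0 ≤ η) (hη : η < 1 / 2)
    (hint : IntegrableOn (fun x => (1 + x) ^ (-η)) (Set.Ioi 0) μ)
    (K : ℝ → ℝ) (hK : ∀ r : ℝ, 0 < r → K r = c₀ + ∫ x in Set.Ioi 0, Real.exp (-(x * r)) ∂μ)
    (T : ℝ) (hT : 0 < T) :
    ∃ C₁ : ℝ, 0 < C₁ ∧ ∃ C₂ : ℝ, 0 < C₂ ∧
      (∀ r ∈ Set.Ioc (0 : ℝ) T, K r ≤ C₁ * r ^ (-η)) ∧
      ∀ h ∈ Set.Ioc (0 : ℝ) T,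
        ∫⁻ r in Set.Ioc 0 h, ENNReal.ofReal (K r ^ 2) ≤
          ENNReal.ofReal (C₂ * h ^ (1 - 2 * η)) := by
  have h2η : (0:ℝ) < 1 - 2 * η := by linarith
  set I := ∫ x in Set.Ioi 0, (1 + x) ^ (-η) ∂μ with hIdef
  have hInn : 0 ≤ I := by
    apply setIntegral_nonneg measurableSet_Ioi
    intro x hx
    exact Real.rpow_nonneg (by simp only [Set.mem_Ioi] at hx; linarith) _
  set C₁ := c₀ * T ^ η + Real.exp T * I + 1 with hC₁def
  have hC₁pos : 0 < C₁ := by positivity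
  -- main pointwise bound
  have key : ∀ r ∈ Set.Ioc (0 : ℝ) T, K r ≤ C₁ * r ^ (-η) := by
    rintro r ⟨hr0, hrT⟩
    rw [hK r hr0]
    have hrpos : 0 < r ^ (-η) := Real.rpow_pos_of_pos hr0 _
    have hbound : ∀ x ∈ Set.Ioi (0:ℝ),
        Real.exp (-(x * r)) ≤ Real.exp T * (1 + x) ^ (-η) * r ^ (-η) := by
      intro x hx
      have hx0 : (0:ℝ) < x := hx
      have h1x : (0:ℝ) < 1 + x := by linarith
      have ht : 0 < (1 + x) * r := by positivity
      calc Real.exp (-(x * r)) = Real.exp r * Real.exp (-((1 + x) * r)) := by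
            rw [← Real.exp_add]; ring_nf
        _ ≤ Real.exp T * ((1 + x) * r) ^ (-η) := by
            exact mul_le_mul (Real.exp_le_exp.mpr hrT)
              (exp_neg_le_rpow_aux hη0 (by linarith) ht) (Real.exp_pos _).le
              (Real.exp_pos _).le
        _ = Real.exp T * (1 + x) ^ (-η) * r ^ (-η) := by
            rw [Real.mul_rpow h1x.le hr0.le, mul_assoc]
    have hg : IntegrableOn (fun x => Real.exp T * (1 + x) ^ (-η) * r ^ (-η))
        (Set.Ioi 0) μ := by
      simpa [mul_assoc, IntegrableOn] using (hint.const_mul (Real.exp T)).mul_const (r ^ (-η))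
    have hInt : ∫ x in Set.Ioi 0, Real.exp (-(x * r)) ∂μ ≤ Real.exp T * I * r ^ (-η) := by
      have h1 : ∫ x in Set.Ioi 0, Real.exp (-(x * r)) ∂μ ≤
          ∫ x in Set.Ioi 0, Real.exp T * (1 + x) ^ (-η) * r ^ (-η) ∂μ := by
        apply integral_mono_of_nonneg
        · exact Filter.Eventually.of_forall fun x => (Real.exp_pos _).le
        · exact hg
        · filter_upwards [ae_restrict_mem measurableSet_Ioi] with x hx
          exact hbound x hx
      have h2 : ∫ x in Set.Ioi 0, Real.exp T * (1 + x) ^ (-η) * r ^ (-η) ∂μ =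
          Real.exp T * I * r ^ (-η) := by
        have he : (fun x => Real.exp T * (1 + x) ^ (-η) * r ^ (-η)) =
            fun x => (Real.exp T * r ^ (-η)) * (1 + x) ^ (-η) := by ext x; ring
        rw [hIdef, he, integral_const_mul]
        ring
      linarith
    have hone : 1 ≤ T ^ η * r ^ (-η) := by
      have h1 : r ^ η ≤ T ^ η := Real.rpow_le_rpow hr0.le hrT hη0
      have h2 : r ^ η * r ^ (-η) = 1 := by
        rw [← Real.rpow_add hr0]; simp
      nlinarith
    have hc0 : c₀ ≤ c₀ * T ^ η * r ^ (-η) := by nlinarith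
    calc c₀ + ∫ x in Set.Ioi 0, Real.exp (-(x * r)) ∂μ
        ≤ c₀ * T ^ η * r ^ (-η) + Real.exp T * I * r ^ (-η) := by linarith
      _ ≤ C₁ * r ^ (-η) := by rw [hC₁def]; nlinarith
  refine ⟨C₁, hC₁pos, C₁ ^ 2 / (1 - 2 * η), div_pos (by positivity) h2η, key, ?_⟩
  rintro h ⟨hh0, hhT⟩
  have hKnn : ∀ r ∈ Set.Ioc (0:ℝ) h, 0 ≤ K r := by
    rintro r ⟨hr0, _⟩
    rw [hK r hr0]
    have : 0 ≤ ∫ x in Set.Ioi 0, Real.exp (-(x * r)) ∂μ :=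
      integral_nonneg fun x => (Real.exp_pos _).le
    linarith
  have hsq : ∀ r ∈ Set.Ioc (0:ℝ) h, K r ^ 2 ≤ C₁ ^ 2 * r ^ (-2 * η) := by
    rintro r hr
    have hb := key r ⟨hr.1, hr.2.trans hhT⟩
    have hnn := hKnn r hr
    have hrp : 0 < r ^ (-η) := Real.rpow_pos_of_pos hr.1 _
    have h2 : (r ^ (-η)) ^ 2 = r ^ (-2 * η) := by
      rw [sq, ← Real.rpow_add hr.1]; ring_nf
    calc K r ^ 2 ≤ (C₁ * r ^ (-η)) ^ 2 := by nlinarith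
      _ = C₁ ^ 2 * r ^ (-2 * η) := by rw [mul_pow, h2]
  have hg2 : IntegrableOn (fun r => C₁ ^ 2 * r ^ (-2 * η)) (Set.Ioc 0 h) := by
    rw [← intervalIntegrable_iff_integrableOn_Ioc_of_le hh0.le]
    exact (intervalIntegral.intervalIntegrable_rpow' (by linarith)).const_mul _
  calc ∫⁻ r in Set.Ioc 0 h, ENNReal.ofReal (K r ^ 2)
      ≤ ∫⁻ r in Set.Ioc 0 h, ENNReal.ofReal (C₁ ^ 2 * r ^ (-2 * η)) := by
        apply lintegral_mono_ae
        filter_upwards [ae_restrict_mem measurableSet_Ioc] with r hr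
        exact ENNReal.ofReal_le_ofReal (hsq r hr)
    _ = ENNReal.ofReal (∫ r in Set.Ioc 0 h, C₁ ^ 2 * r ^ (-2 * η)) := by
        rw [← ofReal_integral_eq_lintegral_ofReal hg2]
        filter_upwards [ae_restrict_mem measurableSet_Ioc] with r hr
        have : 0 < r := hr.1
        positivity
    _ ≤ ENNReal.ofReal (C₁ ^ 2 / (1 - 2 * η) * h ^ (1 - 2 * η)) := by
        apply ENNReal.ofReal_le_ofReal
        have hcalc : ∫ r in Set.Ioc 0 h, C₁ ^ 2 * r ^ (-2 * η) =
            C₁ ^ 2 * ((h ^ (-2 * η + 1) - (0:ℝ) ^ (-2 * η + 1)) / (-2 * η + 1)) := by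
          rw [← intervalIntegral.integral_of_le hh0.le, intervalIntegral.integral_const_mul,
            integral_rpow (Or.inl (by linarith))]
        rw [hcalc, Real.zero_rpow (by linarith)]
        have he : -2 * η + 1 = 1 - 2 * η := by ring
        rw [he, sub_zero]
        apply le_of_eq
        ring
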